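/- Let G be a finite simple graph and r a nonnegative integer. Then m_e(G, r) ≤ r · m(G, r) where m(G, r) is the minimum size of a percolating set in the r-neighbor bootstrap percolation on G and m_e(G, r) is the minimum size of a percolating set in the r-edge bootstrap percolation on G. -/

import Mathlib

/-- One round of the `r`-edge bootstrap percolation process on `G`: an inactive edge
becomes active if one of its endpoints is incident to at least `r` active edges. -/
def edgeStep {V : Type*} (G : SimpleGraph V) (r : ℕ) (A : Set (Sym2 V)) : Set (Sym2 V) :=
  A ∪ {e | e ∈ G.edgeSet ∧ ∃ v ∈ e, r ≤ {f | f ∈ G.edgeSet ∧ v ∈ f ∧ f ∈ A}.ncard}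

/-- A set `A` of edges of `G` percolates in the `r`-edge bootstrap percolation process
if iterating the activation rule eventually activates every edge of `G`. -/
def EdgePercolates {V : Type*} (G : SimpleGraph V) (r : ℕ) (A : Set (Sym2 V)) : Prop :=
  A ⊆ G.edgeSet ∧ ∃ k, (edgeStep G r)^[k] A = G.edgeSet

/-- `me G r` is the minimum size of a percolating set in the `r`-edge bootstrap
percolation process on `G`. -/
noncomputable def me {V : Type*} (G : SimpleGraph V) (r : ℕ) : ℕ :=
  sInf {k | ∃ A, EdgePercolates G r A ∧ A.ncard = k}

/-- One round of the `r`-neighbor bootstrap percolation process on `G`: an inactive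
vertex becomes active if it has at least `r` active neighbors. -/
def vertexStep {V : Type*} (G : SimpleGraph V) (r : ℕ) (A : Set V) : Set V :=
  A ∪ {v | r ≤ (G.neighborSet v ∩ A).ncard}

/-- A set `A` of vertices of `G` percolates in the `r`-neighbor bootstrap percolation
process if iterating the activation rule eventually activates every vertex. -/
def VertexPercolates {V : Type*} (G : SimpleGraph V) (r : ℕ) (A : Set V) : Prop :=
  ∃ k, (vertexStep G r)^[k] A = Set.univ

/-- `mv G r` is the minimum size of a percolating set in the `r`-neighbor bootstrap
percolation process on `G`. -/
noncomputable def mv {V : Type*} (G : SimpleGraph V) (r : ℕ) : ℕ :=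
  sInf {k | ∃ A, VertexPercolates G r A ∧ A.ncard = k}

lemma my_ncard_biUnion_le {α β : Type*} (s : Finset α) (F : α → Set β) :
    (⋃ a ∈ s, F a).ncard ≤ ∑ a ∈ s, (F a).ncard := by
  classical
  induction s using Finset.induction with
  | empty => simp
  | insert _ _ h ih =>
      rw [Finset.set_biUnion_insert, Finset.sum_insert h]
      exact le_trans (Set.ncard_union_le _ _) (add_le_add_right ih _)

/-- If all edges at vertices of `A` get activated in one edge step from `E₀`, then
edges at vertices of the `k`-th vertex-bootstrap iterate of `A` are activated within
`k+1` edge steps. -/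
lemma key_lemma {V : Type*} [Fintype V] (G : SimpleGraph V) (r : ℕ) (A : Set V)
    (E₀ : Set (Sym2 V))
    (hbase : ∀ e ∈ G.edgeSet, ∀ v ∈ e, v ∈ A → e ∈ edgeStep G r E₀) :
    ∀ k, ∀ e ∈ G.edgeSet, ∀ v ∈ e, v ∈ (vertexStep G r)^[k] A →
      e ∈ (edgeStep G r)^[k+1] E₀ := by
  intro k
  induction k with
  | zero => simpa using hbase
  | succ k ih =>
      intro e he v hv hvmem
      rw [Function.iterate_succ_apply'] at hvmem
      rw [show k + 1 + 1 = (k+1) + 1 from rfl, Function.iterate_succ_apply']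
      rcases hvmem with hvmem | hvcount
      · exact Or.inl (ih e he v hv hvmem)
      · refine Or.inr ⟨he, v, hv, ?_⟩
        have hinj : Set.InjOn (fun u => s(v, u))
            (G.neighborSet v ∩ (vertexStep G r)^[k] A) := by
          intro a _ b _ hab
          exact Sym2.congr_right.mp hab
        have himg : (fun u => s(v, u)) '' (G.neighborSet v ∩ (vertexStep G r)^[k] A) ⊆
            {f | f ∈ G.edgeSet ∧ v ∈ f ∧ f ∈ (edgeStep G r)^[k+1] E₀} := by
          rintro f ⟨u, ⟨hadj, hu⟩, rfl⟩
          have hedge : s(v, u) ∈ G.edgeSet := hadj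
          exact ⟨hedge, Sym2.mem_mk_left _ _,
            ih s(v, u) hedge u (Sym2.mem_mk_right _ _) hu⟩
        calc r ≤ (G.neighborSet v ∩ (vertexStep G r)^[k] A).ncard := hvcount
          _ = ((fun u => s(v, u)) '' (G.neighborSet v ∩ (vertexStep G r)^[k] A)).ncard :=
              (Set.ncard_image_of_injOn hinj).symm
          _ ≤ _ := Set.ncard_le_ncard himg (Set.toFinite _)

lemma edgeStep_iter_subset {V : Type*} (G : SimpleGraph V) (r : ℕ) (E₀ : Set (Sym2 V))
    (hE : E₀ ⊆ G.edgeSet) : ∀ k, (edgeStep G r)^[k] E₀ ⊆ G.edgeSet := by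
  intro k
  induction k with
  | zero => simpa using hE
  | succ k ih =>
      rw [Function.iterate_succ_apply']
      rintro e (he | he)
      · exact ih he
      · exact he.1

/-- For any finite simple graph `G` and nonnegative integer `r`:
`m_e(G, r) ≤ r · m(G, r)`, where `m(G, r)` is the minimum size of a percolating set in
the `r`-neighbor bootstrap percolation on `G` and `m_e(G, r)` the minimum size of a
percolating set in the `r`-edge bootstrap percolation on `G`. -/
theorem me_le_r_mul_m {V : Type*} [Fintype V] (G : SimpleGraph V) (r : ℕ) :
    me G r ≤ r * mv G r := by
  classical
  -- the vertex-percolation set is nonempty (univ percolates), so mv is attained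
  have hne : {k | ∃ A, VertexPercolates G r A ∧ A.ncard = k}.Nonempty :=
    ⟨(Set.univ : Set V).ncard, Set.univ, ⟨0, rfl⟩, rfl⟩
  obtain ⟨A, hA, hAcard⟩ := Nat.sInf_mem hne
  -- choose a set `F v` of up to `r` edges at each vertex
  have hchoice : ∀ v : V, ∃ F : Set (Sym2 V), F ⊆ G.incidenceSet v ∧ F.ncard ≤ r ∧
      (r ≤ (G.incidenceSet v).ncard → F.ncard = r) ∧
      ((G.incidenceSet v).ncard < r → F = G.incidenceSet v) := by
    intro v
    by_cases h : r ≤ (G.incidenceSet v).ncard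
    · obtain ⟨t, ht, htc⟩ := Set.exists_subset_card_eq h
      exact ⟨t, ht, htc.le, fun _ => htc, fun h' => absurd h (not_le.2 h')⟩
    · exact ⟨G.incidenceSet v, Set.Subset.rfl, (not_le.1 h).le,
        fun h' => absurd h' h, fun _ => rfl⟩
  choose F hFsub hFle hFeq hFall using hchoice
  set E₀ : Set (Sym2 V) := ⋃ v ∈ A, F v with hE₀def
  have hE₀sub : E₀ ⊆ G.edgeSet := by
    rintro e he
    simp only [hE₀def, Set.mem_iUnion] at he
    obtain ⟨v, _, hv⟩ := he
    exact (G.incidenceSet_subset v) (hFsub v hv)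
  -- base case: every edge at a vertex of A gets activated in one step
  have hbase : ∀ e ∈ G.edgeSet, ∀ v ∈ e, v ∈ A → e ∈ edgeStep G r E₀ := by
    intro e he v hv hvA
    by_cases h : r ≤ (G.incidenceSet v).ncard
    · refine Or.inr ⟨he, v, hv, ?_⟩
      have hsub : F v ⊆ {f | f ∈ G.edgeSet ∧ v ∈ f ∧ f ∈ E₀} := by
        intro f hf
        exact ⟨(hFsub v hf).1, (hFsub v hf).2, Set.mem_biUnion hvA hf⟩
      calc r = (F v).ncard := (hFeq v h).symm
        _ ≤ _ := Set.ncard_le_ncard hsub (Set.toFinite _)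
    · refine Or.inl ?_
      have : e ∈ F v := by rw [hFall v (not_le.1 h)]; exact ⟨he, hv⟩
      exact Set.mem_biUnion hvA this
  -- E₀ percolates
  obtain ⟨K, hK⟩ := hA
  have hperc : EdgePercolates G r E₀ := by
    refine ⟨hE₀sub, K + 1, Set.Subset.antisymm (edgeStep_iter_subset G r E₀ hE₀sub _) ?_⟩
    intro e he
    induction e using Sym2.ind with
    | _ a b =>
        exact key_lemma G r A E₀ hbase K s(a, b) he a (Sym2.mem_mk_left _ _)
          (by rw [hK]; trivial)
  -- cardinality bound
  have hle : me G r ≤ E₀.ncard := Nat.sInf_le ⟨E₀, hperc, rfl⟩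
  have hcard : E₀.ncard ≤ r * mv G r := by
    have h1 : E₀ = ⋃ v ∈ A.toFinset, F v := by simp [hE₀def, Set.mem_toFinset]
    calc E₀.ncard ≤ ∑ v ∈ A.toFinset, (F v).ncard := by
          rw [h1]; exact my_ncard_biUnion_le _ _
      _ ≤ ∑ _v ∈ A.toFinset, r := Finset.sum_le_sum fun v _ => hFle v
      _ = A.toFinset.card * r := by rw [Finset.sum_const, smul_eq_mul]
      _ = r * mv G r := by
          rw [mul_comm]; congr 1; rw [← Set.ncard_eq_toFinset_card']; exact hAcard
  exact hle.trans hcard
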